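/- Let p be a prime and let 0 < ε < 1. Then for every natural number d with d ≥ 2·ln(2p)/ε there exist k_1, …, k_d ∈ {0, 1, …, p−1} such that for every j ∈ {1, …, p−1}: (1/d²)·(Σ_{i=1}^d cos(2πk_i j/p))² ≤ ε, equivalently |Σ_{i=1}^d cos(2πk_i j/p)| ≤ √ε·d. -/

import Mathlib

open Real Finset

lemma sum_cos_eq_zero (p j : ℕ) (hj0 : 0 < j) (hjp : j < p) :
    ∑ k ∈ Finset.range p, Real.cos (2 * π * k * j / p) = 0 := by
  have hp0 : (0:ℝ) < p := by exact_mod_cast hj0.trans hjp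
  have hpne : (p:ℂ) ≠ 0 := by exact_mod_cast hp0.ne'
  set z : ℂ := Complex.exp ((2 * π * j / p : ℝ) * Complex.I) with hz
  have hzk : ∀ k : ℕ, z ^ k = Complex.exp (((2 * π * k * j / p : ℝ) : ℂ) * Complex.I) := by
    intro k
    rw [hz, ← Complex.exp_nat_mul]
    congr 1
    push_cast
    ring
  have hz1 : z ≠ 1 := by
    intro h
    rw [hz, Complex.exp_eq_one_iff] at h
    obtain ⟨n, hn⟩ := h
    have h2 : ((2 * π * j / p : ℝ) : ℂ) = ((n * (2 * π) : ℝ) : ℂ) := by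
      apply mul_right_cancel₀ Complex.I_ne_zero
      rw [hn]; push_cast; ring
    have h3 : (2 * π * j / p : ℝ) = n * (2 * π) := by exact_mod_cast h2
    have hπ := Real.pi_ne_zero
    have h4 : (j : ℝ) = n * p := by
      have h2π : (2*π:ℝ) ≠ 0 := by positivity
      apply mul_left_cancel₀ h2π
      field_simp at h3
      linear_combination (2 * π) * h3
    have hn0 : (0:ℝ) < n := by
      rcases lt_trichotomy (0:ℝ) (n:ℝ) with h | h | h
      · exact h
      · rw [← h, zero_mul] at h4; exact absurd h4 (by exact_mod_cast hj0.ne')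
      · nlinarith [(by exact_mod_cast hj0 : (0:ℝ) < (j:ℝ))]
    have hn1 : (1:ℝ) ≤ n := by exact_mod_cast (by exact_mod_cast hn0 : (0:ℤ) < n)
    have : (j:ℝ) < p := by exact_mod_cast hjp
    nlinarith
  have hzp : z ^ p = 1 := by
    rw [hz, ← Complex.exp_nat_mul]
    rw [Complex.exp_eq_one_iff]
    refine ⟨j, ?_⟩
    push_cast
    field_simp
  have hgeom : ∑ k ∈ Finset.range p, z ^ k = 0 := by
    rw [geom_sum_eq hz1, hzp]
    simp
  have hre : ∑ k ∈ Finset.range p, Real.cos (2 * π * k * j / p)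
      = (∑ k ∈ Finset.range p, z ^ k).re := by
    rw [Complex.re_sum]
    refine Finset.sum_congr rfl fun k _ => ?_
    rw [hzk k, Complex.exp_ofReal_mul_I_re]
  rw [hre, hgeom, Complex.zero_re]

lemma exp_mul_le_of_abs_le (t x : ℝ) (hx : |x| ≤ 1) :
    Real.exp (t * x) ≤ Real.cosh t + x * Real.sinh t := by
  obtain ⟨hx1, hx2⟩ := abs_le.mp hx
  have h := convexOn_exp.2 (Set.mem_univ (-t)) (Set.mem_univ t)
      (by linarith : (0:ℝ) ≤ (1 - x)/2) (by linarith : (0:ℝ) ≤ (1 + x)/2) (by ring)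
  simp only [smul_eq_mul] at h
  have e1 : (1 - x)/2 * (-t) + (1 + x)/2 * t = t * x := by ring
  rw [e1] at h
  rw [Real.cosh_eq, Real.sinh_eq]
  nlinarith [h]

lemma chernoff_count {α : Type*} [Fintype α] (s : Finset α) (X : α → ℝ) (c B M : ℝ)
    (hc : 0 ≤ c) (h : ∀ f ∈ s, B < X f)
    (hM : ∑ f : α, Real.exp (c * X f) ≤ M) :
    (s.card : ℝ) * Real.exp (c * B) ≤ M := by
  calc (s.card : ℝ) * Real.exp (c * B) = ∑ _f ∈ s, Real.exp (c * B) := by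
        rw [Finset.sum_const, nsmul_eq_mul]
    _ ≤ ∑ f ∈ s, Real.exp (c * X f) := by
        refine Finset.sum_le_sum fun f hf => ?_
        exact Real.exp_le_exp.2 (mul_le_mul_of_nonneg_left (h f hf).le hc)
    _ ≤ ∑ f : α, Real.exp (c * X f) :=
        Finset.sum_le_sum_of_subset_of_nonneg (Finset.subset_univ s)
          (fun _ _ _ => (Real.exp_pos _).le)
    _ ≤ M := hM

lemma mgf_tuple_le (p j d : ℕ) (hj0 : 0 < j) (hjp : j < p) (c : ℝ) :
    ∑ f : Fin d → Fin p, Real.exp (c * ∑ i, Real.cos (2 * π * (f i) * j / p))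
      ≤ ((p : ℝ) * Real.exp (c ^ 2 / 2)) ^ d := by
  have hcoord : ∑ x : Fin p, Real.exp (c * Real.cos (2 * π * x * j / p))
      ≤ (p : ℝ) * Real.exp (c ^ 2 / 2) := by
    have h1 : ∑ x : Fin p, Real.exp (c * Real.cos (2 * π * x * j / p))
        = ∑ k ∈ Finset.range p, Real.exp (c * Real.cos (2 * π * k * j / p)) := by
      rw [Finset.sum_range fun k => Real.exp (c * Real.cos (2 * π * k * j / p))]
    rw [h1]
    calc ∑ k ∈ Finset.range p, Real.exp (c * Real.cos (2 * π * k * j / p))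
        ≤ ∑ k ∈ Finset.range p,
            (Real.cosh c + Real.cos (2 * π * k * j / p) * Real.sinh c) :=
          Finset.sum_le_sum fun k _ =>
            exp_mul_le_of_abs_le c _ (Real.abs_cos_le_one _)
      _ = (p : ℝ) * Real.cosh c
            + (∑ k ∈ Finset.range p, Real.cos (2 * π * k * j / p)) * Real.sinh c := by
          rw [Finset.sum_add_distrib, Finset.sum_const, Finset.card_range,
            nsmul_eq_mul, ← Finset.sum_mul]
      _ = (p : ℝ) * Real.cosh c := by rw [sum_cos_eq_zero p j hj0 hjp]; ring
      _ ≤ (p : ℝ) * Real.exp (c ^ 2 / 2) := by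
          have := Real.cosh_le_exp_half_sq c
          have hp0 : (0:ℝ) ≤ p := Nat.cast_nonneg p
          nlinarith
  calc ∑ f : Fin d → Fin p, Real.exp (c * ∑ i, Real.cos (2 * π * (f i) * j / p))
      = ∑ f : Fin d → Fin p, ∏ i, Real.exp (c * Real.cos (2 * π * (f i) * j / p)) := by
        refine Finset.sum_congr rfl fun f _ => ?_
        rw [← Real.exp_sum, Finset.mul_sum]
    _ = ∏ _i : Fin d, ∑ x : Fin p, Real.exp (c * Real.cos (2 * π * x * j / p)) := by
        rw [Finset.prod_univ_sum]
        rw [Fintype.piFinset_univ]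
    _ = (∑ x : Fin p, Real.exp (c * Real.cos (2 * π * x * j / p))) ^ d := by
        rw [Finset.prod_const, Finset.card_univ, Fintype.card_fin]
    _ ≤ ((p : ℝ) * Real.exp (c ^ 2 / 2)) ^ d := by
        apply pow_le_pow_left₀ (Finset.sum_nonneg fun x _ => (Real.exp_pos _).le) hcoord

lemma card_bad_le (p d : ℕ) (ε : ℝ) (hε0 : 0 < ε) (hp0 : 0 < p)
    (hεd : 2 * Real.log (2 * p) ≤ ε * d) (A : ℝ)
    (h : A * Real.exp (Real.sqrt ε * (Real.sqrt ε * d))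
      ≤ ((p : ℝ) * Real.exp ((Real.sqrt ε) ^ 2 / 2)) ^ d) :
    A ≤ (p : ℝ) ^ d * (1 / (2 * p)) := by
  have ht2 : (Real.sqrt ε) ^ 2 = ε := Real.sq_sqrt hε0.le
  have hp0' : (0:ℝ) < p := by exact_mod_cast hp0
  have h' : A * Real.exp (ε * d) ≤ (p : ℝ) ^ d * Real.exp (ε * d / 2) := by
    have e1 : Real.sqrt ε * (Real.sqrt ε * d) = ε * d := by
      rw [← mul_assoc, ← sq]; rw [ht2]
    have e2 : ((p : ℝ) * Real.exp ((Real.sqrt ε) ^ 2 / 2)) ^ d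
        = (p : ℝ) ^ d * Real.exp (ε * d / 2) := by
      rw [ht2, mul_pow, ← Real.exp_nat_mul]
      ring_nf
    rw [e1] at h; rw [e2] at h; exact h
  have he : (0:ℝ) < Real.exp (ε * d) := Real.exp_pos _
  have h1 : A ≤ (p : ℝ) ^ d * Real.exp (ε * d / 2) / Real.exp (ε * d) :=
    (le_div_iff₀ he).2 h'
  have h2 : (p : ℝ) ^ d * Real.exp (ε * d / 2) / Real.exp (ε * d)
      = (p : ℝ) ^ d * Real.exp (-(ε * d / 2)) := by
    rw [mul_div_assoc, ← Real.exp_sub]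
    ring_nf
  have h4 : Real.exp (-(ε * d / 2)) ≤ Real.exp (-(Real.log (2 * p))) :=
    Real.exp_le_exp.2 (by linarith)
  have h5 : Real.exp (-(Real.log (2 * p))) = 1 / (2 * p) := by
    rw [Real.exp_neg, Real.exp_log (by positivity), one_div]
  calc A ≤ (p : ℝ) ^ d * Real.exp (-(ε * d / 2)) := by rw [← h2]; exact h1
    _ ≤ (p : ℝ) ^ d * (1 / (2 * p)) := by
        rw [← h5]; exact mul_le_mul_of_nonneg_left h4 (by positivity)

theorem exists_good_sequence (p : ℕ) (hp : p.Prime) (ε : ℝ) (hε0 : 0 < ε) (hε1 : ε < 1)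
    (d : ℕ) (hd : 2 * Real.log (2 * p) / ε ≤ (d : ℝ)) :
    ∃ k : Fin d → ℕ, (∀ i, k i < p) ∧
      ∀ j : ℕ, 1 ≤ j → j ≤ p - 1 →
        (1 / (d : ℝ) ^ 2) * (∑ i, Real.cos (2 * π * (k i) * j / p)) ^ 2 ≤ ε ∧
        |∑ i, Real.cos (2 * π * (k i) * j / p)| ≤ Real.sqrt ε * d := by
  classical
  have hp2 : 2 ≤ p := hp.two_le
  have hp0 : 0 < p := by omega
  have hp0' : (0:ℝ) < p := by exact_mod_cast hp0
  have hlog : 0 < Real.log (2 * p) := by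
    apply Real.log_pos
    have : (2:ℝ) ≤ (p:ℝ) := by exact_mod_cast hp2
    nlinarith
  have hεd : 2 * Real.log (2 * p) ≤ ε * d := by
    rw [div_le_iff₀ hε0] at hd
    linarith
  have hd0 : 0 < d := by
    by_contra h
    push_neg at h
    interval_cases d
    simp at hεd
    nlinarith
  have hd0' : (0:ℝ) < d := by exact_mod_cast hd0
  set t := Real.sqrt ε with htdef
  have ht0 : 0 ≤ t := Real.sqrt_nonneg ε
  have ht2 : t ^ 2 = ε := Real.sq_sqrt hε0.le
  -- the sum function
  set S : ℕ → (Fin d → Fin p) → ℝ :=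
    fun j f => ∑ i, Real.cos (2 * π * (f i) * j / p) with hS
  -- bad sets
  set Bad : ℕ → Finset (Fin d → Fin p) :=
    fun j => Finset.univ.filter (fun f => t * d < |S j f|) with hBad
  have hcard : ∀ j, 1 ≤ j → j ≤ p - 1 → ((Bad j).card : ℝ) ≤ (p:ℝ)^d * (1/p) := by
    intro j hj1 hj2
    have hjp : j < p := by omega
    have hj0 : 0 < j := hj1
    set Bp : Finset (Fin d → Fin p) :=
      Finset.univ.filter (fun f => t * d < S j f) with hBp
    set Bm : Finset (Fin d → Fin p) :=
      Finset.univ.filter (fun f => t * d < -(S j f)) with hBm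
    have hBsub : Bad j ⊆ Bp ∪ Bm := by
      intro f hf
      rw [hBad] at hf
      simp only [Finset.mem_filter, Finset.mem_univ, true_and] at hf
      rw [Finset.mem_union, hBp, hBm]
      simp only [Finset.mem_filter, Finset.mem_univ, true_and]
      rcases lt_abs.mp hf with h | h
      · exact Or.inl h
      · exact Or.inr h
    have hMp : ((Bp).card : ℝ) ≤ (p:ℝ)^d * (1/(2*p)) := by
      apply card_bad_le p d ε hε0 hp0 hεd
      apply chernoff_count Bp (S j) t (t * d) _ ht0
      · intro f hf
        rw [hBp] at hf
        simpa using (Finset.mem_filter.mp hf).2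
      · exact mgf_tuple_le p j d hj0 hjp t
    have hMm : ((Bm).card : ℝ) ≤ (p:ℝ)^d * (1/(2*p)) := by
      apply card_bad_le p d ε hε0 hp0 hεd
      apply chernoff_count Bm (fun f => -(S j f)) t (t * d) _ ht0
      · intro f hf
        rw [hBm] at hf
        simpa using (Finset.mem_filter.mp hf).2
      · have h := mgf_tuple_le p j d hj0 hjp (-t)
        simp only [neg_mul] at h
        rw [neg_sq] at h
        simpa only [mul_neg, neg_mul] using h
    have h1 : ((Bad j).card : ℝ) ≤ (Bp.card : ℝ) + (Bm.card : ℝ) := by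
      have := (Finset.card_le_card hBsub).trans (Finset.card_union_le Bp Bm)
      exact_mod_cast this
    have : (p:ℝ)^d * (1/(2*p)) + (p:ℝ)^d * (1/(2*p)) = (p:ℝ)^d * (1/p) := by
      field_simp
      ring
    linarith
  -- total bad set
  set T : Finset (Fin d → Fin p) := (Finset.Icc 1 (p-1)).biUnion Bad with hT
  have hTcard : ((T).card : ℝ) < (p:ℝ)^d := by
    have h1 : (T.card : ℝ) ≤ ∑ j ∈ Finset.Icc 1 (p-1), ((Bad j).card : ℝ) := by
      have := Finset.card_biUnion_le (s := Finset.Icc 1 (p-1)) (t := Bad)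
      rw [hT]
      exact_mod_cast this
    have h2 : ∑ j ∈ Finset.Icc 1 (p-1), ((Bad j).card : ℝ)
        ≤ ∑ j ∈ Finset.Icc 1 (p-1), (p:ℝ)^d * (1/p) := by
      refine Finset.sum_le_sum fun j hj => ?_
      rw [Finset.mem_Icc] at hj
      exact hcard j hj.1 hj.2
    have h3 : ∑ j ∈ Finset.Icc 1 (p-1), (p:ℝ)^d * (1/p)
        = ((p:ℕ) - 1 : ℕ) * ((p:ℝ)^d * (1/p)) := by
      rw [Finset.sum_const, Nat.card_Icc, nsmul_eq_mul]
      norm_num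
    have h4 : (((p:ℕ) - 1 : ℕ) : ℝ) = (p:ℝ) - 1 := by
      push_cast [Nat.cast_sub (by omega : 1 ≤ p)]
      ring
    have hppow : (0:ℝ) < (p:ℝ)^d := by positivity
    have h5 : ((p:ℝ) - 1) * ((p:ℝ)^d * (1/p)) < (p:ℝ)^d := by
      rw [mul_comm, mul_assoc]
      have : ((1:ℝ)/p) * ((p:ℝ)-1) < 1 := by
        rw [div_mul_eq_mul_div, one_mul, div_lt_one hp0']
        linarith
      nlinarith
    calc (T.card : ℝ) ≤ _ := h1
      _ ≤ _ := h2
      _ = ((p:ℕ) - 1 : ℕ) * ((p:ℝ)^d * (1/p)) := h3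
      _ = ((p:ℝ) - 1) * ((p:ℝ)^d * (1/p)) := by rw [h4]
      _ < (p:ℝ)^d := h5
  have hex : ∃ f : Fin d → Fin p, f ∉ T := by
    by_contra h
    push_neg at h
    have hsub : (Finset.univ : Finset (Fin d → Fin p)) ⊆ T := fun f _ => h f
    have hle := Finset.card_le_card hsub
    rw [Finset.card_univ] at hle
    have hcardu : Fintype.card (Fin d → Fin p) = p ^ d := by
      simp [Fintype.card_fun]
    rw [hcardu] at hle
    have : ((p^d : ℕ) : ℝ) ≤ (T.card : ℝ) := by exact_mod_cast hle
    rw [Nat.cast_pow] at this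
    linarith
  obtain ⟨f, hf⟩ := hex
  refine ⟨fun i => (f i : ℕ), fun i => (f i).isLt, ?_⟩
  intro j hj1 hj2
  have habs : |S j f| ≤ t * d := by
    by_contra habs
    push_neg at habs
    apply hf
    rw [hT, Finset.mem_biUnion]
    exact ⟨j, Finset.mem_Icc.mpr ⟨hj1, hj2⟩, by
      rw [hBad]; simp only [Finset.mem_filter, Finset.mem_univ, true_and]; exact habs⟩
  have heq : (∑ i, Real.cos (2 * π * ((fun i => ((f i : ℕ))) i) * j / p)) = S j f := by
    rw [hS]
  constructor
  · rw [heq]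
    have h1 : (S j f)^2 ≤ (t*d)^2 := sq_le_sq' (by linarith [abs_le.mp habs]) (abs_le.mp habs).2
    have h2 : (t*d)^2 = ε * d^2 := by rw [mul_pow, ht2]
    rw [h2] at h1
    rw [div_mul_eq_mul_div, one_mul, div_le_iff₀ (by positivity)]
    linarith [h1]
  · rw [heq]
    exact habs
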